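/- The logistic regression empirical loss L_n(θ) = (1/n)Σᵢ ln(1 + e^{−Yᵢ Xᵢᵀθ}) with Yᵢ ∈ {−1,+1}, Xᵢ ∈ ℝ^p, is convex, twice differentiable, and satisfies: for all θ and all d with ‖d‖ ≤ 1/β where β = 2·maxᵢ‖Xᵢ‖, ‖∇L_n(θ+d) − ∇L_n(θ) − ∇²L_n(θ)d‖ ≤ β·dᵀ∇²L_n(θ)d. -/

import Mathlib

open scoped RealInnerProductSpace

lemma pos1exp (s : ℝ) : 0 < 1 + Real.exp s := by positivity

lemma hasDerivAt_logistic (s : ℝ) :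
    HasDerivAt (fun s => Real.log (1 + Real.exp (-s))) (-(1/(1+Real.exp s))) s := by
  have h1 : HasDerivAt (fun s : ℝ => 1 + Real.exp (-s)) (-Real.exp (-s)) s := by
    simpa using ((Real.hasDerivAt_exp (-s)).comp s (hasDerivAt_neg s)).const_add 1
  have h2 := h1.log (by positivity)
  convert h2 using 1
  rw [Real.exp_neg]
  have he : Real.exp s > 0 := Real.exp_pos s
  have h3 : (1 : ℝ) + (Real.exp s)⁻¹ > 0 := by positivity
  field_simp
  ring

lemma hasDerivAt_logistic' (s : ℝ) :
    HasDerivAt (fun s : ℝ => -(1/(1+Real.exp s))) (Real.exp s/(1+Real.exp s)^2) s := by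
  have h1 : HasDerivAt (fun s : ℝ => 1 + Real.exp s) (Real.exp s) s := by
    simpa using (Real.hasDerivAt_exp s).const_add 1
  have h2 := (h1.inv (by positivity)).neg
  have h3 : (fun s : ℝ => -(1/(1+Real.exp s))) = -(fun s => 1 + Real.exp s)⁻¹ := by
    funext x; simp [one_div]
  rw [h3]; rw [neg_div, neg_neg] at h2; exact h2

lemma logistic_convexOn :
    ConvexOn ℝ Set.univ (fun s => Real.log (1 + Real.exp (-s))) := by
  apply convexOn_of_hasDerivWithinAt2_nonneg (f' := fun s => -(1/(1+Real.exp s)))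
    (f'' := fun s => Real.exp s/(1+Real.exp s)^2) convex_univ
  · exact fun x _ => (hasDerivAt_logistic x).continuousAt.continuousWithinAt
  · exact fun x _ => (hasDerivAt_logistic x).hasDerivWithinAt
  · exact fun x _ => (hasDerivAt_logistic' x).hasDerivWithinAt
  · exact fun x _ => by positivity

lemma exp_taylor2 {t : ℝ} (ht : |t| ≤ 1) : |Real.exp t - 1 - t| ≤ 3/4 * t^2 := by
  have h := Real.exp_bound ht (n := 2) (by norm_num)
  have hs : ∑ m ∈ Finset.range 2, t ^ m / m.factorial = 1 + t := by
    simp [Finset.sum_range_succ]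
  rw [hs] at h
  calc |Real.exp t - 1 - t| = |Real.exp t - (1 + t)| := by ring_nf
    _ ≤ |t| ^ 2 * ((2:ℕ).succ / ((2:ℕ).factorial * 2)) := h
    _ = 3/4 * t^2 := by rw [sq_abs]; norm_num; ring

lemma logistic_key {s t : ℝ} (ht : |t| ≤ 1) :
    |(-(1/(1+Real.exp (s+t)))) - (-(1/(1+Real.exp s))) - Real.exp s/(1+Real.exp s)^2 * t|
      ≤ 3/4 * t^2 * (Real.exp s/(1+Real.exp s)^2) := by
  set a := Real.exp s with ha
  set E := Real.exp t with hE
  have haa0 : 0 < a := Real.exp_pos s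
  have hE0 : 0 < E := Real.exp_pos t
  have hst : Real.exp (s+t) = a * E := Real.exp_add s t
  have h1a : (0:ℝ) < 1 + a := by positivity
  have h1aE : (0:ℝ) < 1 + a * E := by positivity
  set g := (E-1)*(1+a)/(1+a*E) with hg
  have key1 : (-(1/(1+a*E))) - (-(1/(1+a))) - a/(1+a)^2 * t
      = a/(1+a)^2 * (g - t) := by
    rw [hg]; field_simp; ring
  have hub : g ≤ E - 1 := by
    have h : E - 1 - g = a*(E-1)^2/(1+a*E) := by rw [hg]; field_simp; ring
    nlinarith [sq_nonneg (E-1), div_nonneg (mul_nonneg haa0.le (sq_nonneg (E-1))) h1aE.le]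
  have hlb : 1 - 1/E ≤ g := by
    have h : g - (1 - 1/E) = (E-1)^2/(E*(1+a*E)) := by rw [hg]; field_simp; ring
    nlinarith [div_nonneg (sq_nonneg (E-1)) (mul_nonneg hE0.le h1aE.le)]
  have hb1 : |E - 1 - t| ≤ 3/4 * t^2 := by
    have h := exp_taylor2 ht
    rwa [← hE] at h
  have hb2 : |1 - 1/E - t| ≤ 3/4 * t^2 := by
    have h := exp_taylor2 (t := -t) (by rwa [abs_neg])
    rw [Real.exp_neg, ← hE] at h
    have e1 : 1 - 1/E - t = -(E⁻¹ - 1 - -t) := by rw [one_div]; ring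
    rw [e1, abs_neg]
    calc |E⁻¹ - 1 - -t| ≤ 3/4 * (-t)^2 := h
      _ = 3/4 * t^2 := by rw [neg_sq]
  have habs : |g - t| ≤ 3/4 * t^2 := by
    rw [abs_le] at hb1 hb2 ⊢
    constructor <;> [linarith [hb2.1]; linarith [hb1.2]]
  have hc : (0:ℝ) ≤ a/(1+a)^2 := by positivity
  rw [hst, key1, abs_mul, abs_of_nonneg hc]
  calc a/(1+a)^2 * |g - t| ≤ a/(1+a)^2 * (3/4 * t^2) :=
        mul_le_mul_of_nonneg_left habs hc
    _ = 3/4 * t^2 * (a/(1+a)^2) := by ring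

open scoped RealInnerProductSpace

lemma term_bound {Y A B nX β : ℝ} (hY : Y = 1 ∨ Y = -1) (hB : |B| ≤ 1)
    (hnX : 0 ≤ nX) (hXβ : 2 * nX ≤ β) :
    |(-(1 / (1 + Real.exp (Y * (A + B))))) * Y - (-(1 / (1 + Real.exp (Y * A)))) * Y
      - Real.exp (Y * A) / (1 + Real.exp (Y * A)) ^ 2 * B| * nX
    ≤ β * (Real.exp (Y * A) / (1 + Real.exp (Y * A)) ^ 2 * B ^ 2) := by
  have hT : |Y * B| ≤ 1 := by rcases hY with h | h <;> simp [h, hB]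
  have hkey := logistic_key (s := Y * A) (t := Y * B) hT
  have heq : (-(1 / (1 + Real.exp (Y * (A + B))))) * Y - (-(1 / (1 + Real.exp (Y * A)))) * Y
      - Real.exp (Y * A) / (1 + Real.exp (Y * A)) ^ 2 * B
      = Y * ((-(1 / (1 + Real.exp (Y * A + Y * B)))) - (-(1 / (1 + Real.exp (Y * A))))
        - Real.exp (Y * A) / (1 + Real.exp (Y * A)) ^ 2 * (Y * B)) := by
    rcases hY with h | h <;> rw [h] <;> ring_nf
  have hY1 : |Y| = 1 := by rcases hY with h | h <;> simp [h]
  have hB2 : (Y * B) ^ 2 = B ^ 2 := by rcases hY with h | h <;> rw [h] <;> ring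
  have hf : 0 ≤ Real.exp (Y * A) / (1 + Real.exp (Y * A)) ^ 2 := by positivity
  rw [heq, abs_mul, hY1, one_mul]
  calc |(-(1 / (1 + Real.exp (Y * A + Y * B)))) - (-(1 / (1 + Real.exp (Y * A))))
        - Real.exp (Y * A) / (1 + Real.exp (Y * A)) ^ 2 * (Y * B)| * nX
      ≤ (3 / 4 * (Y * B) ^ 2 * (Real.exp (Y * A) / (1 + Real.exp (Y * A)) ^ 2)) * nX :=
        mul_le_mul_of_nonneg_right hkey hnX
    _ = (3 / 4 * nX) * (Real.exp (Y * A) / (1 + Real.exp (Y * A)) ^ 2 * B ^ 2) := by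
        rw [hB2]; ring
    _ ≤ β * (Real.exp (Y * A) / (1 + Real.exp (Y * A)) ^ 2 * B ^ 2) := by
        apply mul_le_mul_of_nonneg_right (by linarith) (by positivity)

theorem logistic_empirical_loss_A1 {p n : ℕ} (hn : 0 < n)
    (X : Fin n → EuclideanSpace ℝ (Fin p)) (Y : Fin n → ℝ)
    (hY : ∀ i, Y i = 1 ∨ Y i = -1)
    (L : EuclideanSpace ℝ (Fin p) → ℝ)
    (hLdef : L = fun θ => (1 / (n : ℝ)) * ∑ i, Real.log (1 + Real.exp (-(Y i * ⟪X i, θ⟫))))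
    (G : EuclideanSpace ℝ (Fin p) → EuclideanSpace ℝ (Fin p))
    (hGdef : G = fun θ => (1 / (n : ℝ)) •
      ∑ i, ((-(1 / (1 + Real.exp (Y i * ⟪X i, θ⟫)))) * Y i) • X i)
    (Hess : EuclideanSpace ℝ (Fin p) → EuclideanSpace ℝ (Fin p) → EuclideanSpace ℝ (Fin p))
    (hHdef : Hess = fun θ d => (1 / (n : ℝ)) •
      ∑ i, ((Real.exp (Y i * ⟪X i, θ⟫) / (1 + Real.exp (Y i * ⟪X i, θ⟫)) ^ 2)
        * ⟪X i, d⟫) • X i)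
    (β : ℝ)
    (hβdef : β = 2 * (Finset.univ.sup' (Finset.univ_nonempty_iff.mpr
      (Fin.pos_iff_nonempty.mp hn)) fun i => ‖X i‖)) :
    ConvexOn ℝ Set.univ L ∧
    (∀ θ, HasGradientAt L (G θ) θ) ∧
    (∀ θ d, ‖d‖ ≤ 1 / β →
      ‖G (θ + d) - G θ - Hess θ d‖ ≤ β * ⟪d, Hess θ d⟫) := by
  have hn' : (0:ℝ) < n := Nat.cast_pos.mpr hn
  have hXβ : ∀ i, 2 * ‖X i‖ ≤ β := by
    intro i
    rw [hβdef]
    have := Finset.le_sup' (fun i => ‖X i‖) (Finset.mem_univ i)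
    linarith
  have hβ0 : 0 ≤ β := by
    have := hXβ ⟨0, hn⟩
    have := norm_nonneg (X ⟨0, hn⟩)
    linarith
  refine ⟨?_, ?_, ?_⟩
  · -- convexity
    refine ⟨convex_univ, fun x _ y _ a b ha hb hab => ?_⟩
    simp only [hLdef, smul_eq_mul]
    rw [← mul_assoc, ← mul_assoc, mul_comm a, mul_comm b, mul_assoc, mul_assoc, ← mul_add]
    apply mul_le_mul_of_nonneg_left _ (by positivity)
    rw [Finset.mul_sum, Finset.mul_sum, ← Finset.sum_add_distrib]
    apply Finset.sum_le_sum
    intro i _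
    have hrw : Y i * ⟪X i, a • x + b • y⟫
        = a * (Y i * ⟪X i, x⟫) + b * (Y i * ⟪X i, y⟫) := by
      rw [inner_add_right, real_inner_smul_right, real_inner_smul_right]; ring
    rw [hrw, ← smul_eq_mul, ← smul_eq_mul (a := b)]
    exact logistic_convexOn.2 (Set.mem_univ _) (Set.mem_univ _) ha hb hab
  · -- gradient
    intro θ
    rw [hasGradientAt_iff_hasFDerivAt]
    have hterm : ∀ i : Fin n,
        HasFDerivAt (fun θ : EuclideanSpace ℝ (Fin p) =>
            Real.log (1 + Real.exp (-(Y i * ⟪X i, θ⟫))))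
          (((-(1 / (1 + Real.exp (Y i * ⟪X i, θ⟫)))) * Y i) • innerSL ℝ (X i)) θ := by
      intro i
      have h1 : HasFDerivAt (fun θ : EuclideanSpace ℝ (Fin p) => Y i * ⟪X i, θ⟫)
          (Y i • innerSL ℝ (X i)) θ :=
        HasFDerivAt.const_mul ((innerSL ℝ (X i)).hasFDerivAt) (Y i)
      have h2 := (hasDerivAt_logistic (Y i * ⟪X i, θ⟫)).comp_hasFDerivAt θ h1
      rw [smul_smul] at h2
      exact h2
    have hsum := HasFDerivAt.fun_sum (fun i (_ : i ∈ Finset.univ) => hterm i)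
    have hmul := hsum.const_mul (1 / (n : ℝ))
    rw [hLdef]
    convert hmul using 1
    all_goals (ext w; simp [hGdef, InnerProductSpace.toDual_apply_apply, sum_inner, real_inner_smul_left,
      Finset.mul_sum])
  · -- Taylor bound
    intro θ d hd
    have hB1 : ∀ i, |⟪X i, d⟫| ≤ 1 := by
      intro i
      have h1 := abs_real_inner_le_norm (X i) d
      rcases eq_or_lt_of_le hβ0 with hβ | hβ
      · have hd0 : ‖d‖ ≤ 0 := by
          rw [← hβ] at hd; simpa using hd
        nlinarith [norm_nonneg (X i), norm_nonneg d]
      · have h2 : ‖X i‖ ≤ β / 2 := by linarith [hXβ i]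
        have h3 : ‖X i‖ * ‖d‖ ≤ (β / 2) * (1 / β) :=
          mul_le_mul h2 hd (norm_nonneg d) (by linarith)
        have h4 : (β / 2) * (1 / β) = 1 / 2 := by
          field_simp
        nlinarith
    have hdiff : G (θ + d) - G θ - Hess θ d = (1 / (n : ℝ)) •
        ∑ i, ((-(1 / (1 + Real.exp (Y i * (⟪X i, θ⟫ + ⟪X i, d⟫))))) * Y i
          - (-(1 / (1 + Real.exp (Y i * ⟪X i, θ⟫)))) * Y i
          - Real.exp (Y i * ⟪X i, θ⟫) / (1 + Real.exp (Y i * ⟪X i, θ⟫)) ^ 2 * ⟪X i, d⟫)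
          • X i := by
      simp only [hGdef, hHdef]
      rw [← smul_sub, ← smul_sub, ← Finset.sum_sub_distrib, ← Finset.sum_sub_distrib]
      congr 1
      apply Finset.sum_congr rfl
      intro i _
      rw [← sub_smul, ← sub_smul, inner_add_right]
    have hHinner : β * ⟪d, Hess θ d⟫ = (1 / (n : ℝ)) *
        ∑ i, β * (Real.exp (Y i * ⟪X i, θ⟫) / (1 + Real.exp (Y i * ⟪X i, θ⟫)) ^ 2
          * ⟪X i, d⟫ ^ 2) := by
      simp only [hHdef, real_inner_smul_right, inner_sum, Finset.mul_sum]
      apply Finset.sum_congr rfl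
      intro i _
      rw [real_inner_comm d (X i)]
      ring
    rw [hdiff, hHinner]
    calc ‖(1 / (n : ℝ)) • ∑ i, ((-(1 / (1 + Real.exp (Y i * (⟪X i, θ⟫ + ⟪X i, d⟫))))) * Y i
          - (-(1 / (1 + Real.exp (Y i * ⟪X i, θ⟫)))) * Y i
          - Real.exp (Y i * ⟪X i, θ⟫) / (1 + Real.exp (Y i * ⟪X i, θ⟫)) ^ 2 * ⟪X i, d⟫)
          • X i‖
        = (1 / (n : ℝ)) * ‖∑ i, ((-(1 / (1 + Real.exp (Y i * (⟪X i, θ⟫ + ⟪X i, d⟫))))) * Y i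
          - (-(1 / (1 + Real.exp (Y i * ⟪X i, θ⟫)))) * Y i
          - Real.exp (Y i * ⟪X i, θ⟫) / (1 + Real.exp (Y i * ⟪X i, θ⟫)) ^ 2 * ⟪X i, d⟫)
          • X i‖ := by
          rw [norm_smul, Real.norm_eq_abs, abs_of_nonneg (by positivity)]
      _ ≤ (1 / (n : ℝ)) * ∑ i, ‖((-(1 / (1 + Real.exp (Y i * (⟪X i, θ⟫ + ⟪X i, d⟫))))) * Y i
          - (-(1 / (1 + Real.exp (Y i * ⟪X i, θ⟫)))) * Y i
          - Real.exp (Y i * ⟪X i, θ⟫) / (1 + Real.exp (Y i * ⟪X i, θ⟫)) ^ 2 * ⟪X i, d⟫)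
          • X i‖ := by
          apply mul_le_mul_of_nonneg_left (norm_sum_le _ _) (by positivity)
      _ ≤ (1 / (n : ℝ)) * ∑ i, β * (Real.exp (Y i * ⟪X i, θ⟫)
          / (1 + Real.exp (Y i * ⟪X i, θ⟫)) ^ 2 * ⟪X i, d⟫ ^ 2) := by
          apply mul_le_mul_of_nonneg_left _ (by positivity)
          apply Finset.sum_le_sum
          intro i _
          rw [norm_smul, Real.norm_eq_abs]
          exact term_bound (hY i) (hB1 i) (norm_nonneg (X i)) (hXβ i)
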